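/- Let κ be regular uncountable, S ⊆ κ stationary, and assume ◊_κ(S) holds, witnessed by ⟨D_α : α ∈ S⟩ (each D_α ⊆ α, and for every X ⊆ κ the set {α ∈ S : D_α = X ∩ α} is stationary). Then E_0 is Borel reducible to E_S, where E_0 relates X, Y ⊆ κ iff X Δ Y is bounded in κ, and E_S relates X, Y iff (X Δ Y) ∩ S is non-stationary. The map f(X) = {α ∈ S : D_α and X ∩ α agree on a final segment of α} is such a reduction. -/

import Mathlib

open Set

universe u

namespace GDST

def KS (I : Type u) : Type u := I → I
def CS (I : Type u) : Type u := I → Bool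

def kBasic {I : Type u} [LT I] (ζ : I → I) (β : I) : Set (KS I) :=
  {η : KS I | ∀ α : I, α < β → η α = ζ α}

def cBasic {I : Type u} [LT I] (ζ : I → Bool) (β : I) : Set (CS I) :=
  {η : CS I | ∀ α : I, α < β → η α = ζ α}

instance kTop {I : Type u} [LT I] : TopologicalSpace (KS I) :=
  TopologicalSpace.generateFrom {U | ∃ ζ β, U = kBasic ζ β}

instance cTop {I : Type u} [LT I] : TopologicalSpace (CS I) :=
  TopologicalSpace.generateFrom {U | ∃ ζ β, U = cBasic ζ β}
/-- κ-Borel subsets of `2^κ`: smallest family containing the basic open sets and closed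
under complements and intersections of size `≤ κ` (indexed by `I`, of cardinality `κ`). -/
inductive IsCBorel {I : Type u} [LT I] : Set (CS I) → Prop
  | basic (ζ : I → Bool) (β : I) : IsCBorel (cBasic ζ β)
  | compl {s : Set (CS I)} : IsCBorel s → IsCBorel sᶜ
  | iInter {s : I → Set (CS I)} : (∀ i, IsCBorel (s i)) → IsCBorel (⋂ i, s i)
/-- `C` is closed in `o`: every nonzero accumulation point of `C` below `o` lies in `C`. -/
def ClosedIn (C : Set Ordinal) (o : Ordinal) : Prop :=
  ∀ a : Ordinal, a < o → a ≠ 0 → (∀ b : Ordinal, b < a → ∃ c ∈ C, b < c ∧ c < a) → a ∈ C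

/-- `C` is unbounded in `o`. -/
def UnbIn (C : Set Ordinal) (o : Ordinal) : Prop :=
  ∀ a : Ordinal, a < o → ∃ b ∈ C, a < b ∧ b < o

/-- `C` is closed and unbounded (club) in `o`. -/
def ClubIn (C : Set Ordinal) (o : Ordinal) : Prop := ClosedIn C o ∧ UnbIn C o

/-- `S` is stationary in `o`: it meets every club subset of `o`. -/
def StatIn (S : Set Ordinal) (o : Ordinal) : Prop := ∀ C, ClubIn C o → (S ∩ C).Nonempty

/-- The ordinals `< κ`, our copy of the cardinal `κ` as an ordered set. -/
abbrev Sub (κ : Cardinal) : Type 1 := {o : Ordinal // o < κ.ord}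

/-- The subset of `κ` coded by `η ∈ 2^κ`. -/
def toSet (κ : Cardinal) (η : CS (Sub κ)) : Set Ordinal :=
  {o : Ordinal | ∃ h : o < κ.ord, η ⟨o, h⟩ = true}

section Aux

lemma mem_cBasic_self {I : Type u} [LT I] (η : CS I) (β : I) : η ∈ cBasic η β :=
  fun _ _ => rfl

lemma cBasic_mono {I : Type u} [Preorder I] (ζ : CS I) {β β' : I} (h : β ≤ β') :
    cBasic ζ β' ⊆ cBasic ζ β := fun _ hη α hα => hη α (lt_of_lt_of_le hα h)

lemma cBasic_shrink {I : Type u} [LT I] {ζ η : CS I} {β : I} (h : η ∈ cBasic ζ β) :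
    cBasic η β ⊆ cBasic ζ β := fun _ hη' α hα => (hη' α hα).trans (h α hα)

lemma cBasic_congr {I : Type u} [LT I] {ζ ζ' : CS I} {β : I}
    (h : ∀ α, α < β → ζ α = ζ' α) : cBasic ζ β = cBasic ζ' β := by
  ext η
  constructor <;> intro hη α hα
  · exact (hη α hα).trans (h α hα)
  · exact (hη α hα).trans (h α hα).symm

lemma open_basis {I : Type u} [LinearOrder I] [Nonempty I] {U : Set (CS I)}
    (hU : TopologicalSpace.GenerateOpen {V | ∃ ζ β, V = cBasic ζ β} U) :
    ∀ η ∈ U, ∃ β, cBasic η β ⊆ U := by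
  induction hU with
  | basic V hV =>
    obtain ⟨ζ, β, rfl⟩ := hV
    exact fun η hη => ⟨β, cBasic_shrink hη⟩
  | univ => exact fun η _ => ⟨Classical.arbitrary I, fun _ _ => trivial⟩
  | inter s t hs ht ihs iht =>
    intro η hη
    obtain ⟨β₁, h₁⟩ := ihs η hη.1
    obtain ⟨β₂, h₂⟩ := iht η hη.2
    exact ⟨max β₁ β₂, fun η' hη' =>
      ⟨h₁ (cBasic_mono η (le_max_left _ _) hη'), h₂ (cBasic_mono η (le_max_right _ _) hη')⟩⟩
  | sUnion SS hSS ih =>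
    intro η hη
    obtain ⟨V, hV, hηV⟩ := hη
    obtain ⟨β, hβ⟩ := ih V hV η hηV
    exact ⟨β, fun η' h => ⟨V, hV, hβ h⟩⟩

lemma preimage_open {I : Type u} [LT I] {f : CS I → CS I}
    (hloc : ∀ (η η' : CS I) (β : I), (∀ α, α < β → η' α = η α) → ∀ α, α < β → f η' α = f η α)
    {U : Set (CS I)} (hU : IsOpen U) : IsOpen (f ⁻¹' U) := by
  have h : TopologicalSpace.GenerateOpen {V | ∃ ζ β, V = cBasic ζ β} U := hU
  clear hU
  induction h with
  | basic V hV =>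
    obtain ⟨ζ, β, rfl⟩ := hV
    have heq : f ⁻¹' cBasic ζ β = ⋃₀ {W | ∃ η, η ∈ f ⁻¹' cBasic ζ β ∧ W = cBasic η β} := by
      ext η'
      constructor
      · intro h
        exact ⟨cBasic η' β, ⟨η', h, rfl⟩, mem_cBasic_self η' β⟩
      · rintro ⟨W, ⟨η, hη, rfl⟩, hη'⟩
        intro α hα
        exact (hloc η η' β hη' α hα).trans (hη α hα)
    rw [heq]
    refine isOpen_sUnion ?_
    rintro W ⟨η, -, rfl⟩
    exact TopologicalSpace.GenerateOpen.basic _ ⟨η, β, rfl⟩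
  | univ => rw [Set.preimage_univ]; exact isOpen_univ
  | inter s t _ _ ihs iht => rw [Set.preimage_inter]; exact ihs.inter iht
  | sUnion SS _ ih =>
    rw [Set.preimage_sUnion]
    exact isOpen_biUnion ih

lemma club_Ioo {o : Ordinal} (ho : Order.IsSuccLimit o) {β : Ordinal} (hβ : β < o) :
    ClubIn (Ioo β o) o := by
  constructor
  · intro a ha ha0 hacc
    obtain ⟨c, hc, _, hca⟩ := hacc 0 (pos_iff_ne_zero.mpr ha0)
    exact ⟨hc.1.trans hca, ha⟩
  · intro a ha
    refine ⟨Order.succ (max a β), ⟨?_, ?_⟩, ?_, ?_⟩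
    · exact lt_of_le_of_lt (le_max_right a β) (Order.lt_succ _)
    · exact ho.succ_lt (max_lt ha hβ)
    · exact lt_of_le_of_lt (le_max_left a β) (Order.lt_succ _)
    · exact ho.succ_lt (max_lt ha hβ)

lemma seq_exists {o : Ordinal} (P : Ordinal → Ordinal → Prop)
    (hstep : ∀ x < o, ∃ y < o, x < y ∧ P x y) {a : Ordinal} (ha : a < o) :
    ∃ g : ℕ → Ordinal, g 0 = a ∧ (∀ n, g n < o) ∧ (∀ n, g n < g (n + 1)) ∧
      ∀ n, P (g n) (g (n + 1)) := by
  choose y hy hxy hP using hstep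
  let g : ℕ → {x : Ordinal // x < o} :=
    fun n => Nat.rec ⟨a, ha⟩ (fun _ p => ⟨y p.1 p.2, hy p.1 p.2⟩) n
  exact ⟨fun n => (g n).1, rfl, fun n => (g n).2, fun n => hxy _ _, fun n => hP _ _⟩

lemma sup_club {o : Ordinal} (hcof : Cardinal.aleph0 < o.cof) {g : ℕ → Ordinal}
    (hgo : ∀ n, g n < o) (hglt : ∀ n, g n < g (n + 1)) :
    (⨆ n, g n) < o ∧ ∀ n, g n < ⨆ n, g n := by
  constructor
  · exact Ordinal.iSup_lt_ord_lift (by rwa [Cardinal.mk_nat, Cardinal.lift_aleph0]) hgo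
  · intro n
    exact lt_of_lt_of_le (hglt n) (Ordinal.le_iSup g (n + 1))

lemma clubIn_inter {o : Ordinal} (hcof : Cardinal.aleph0 < o.cof) {C C' : Set Ordinal}
    (hC : ClubIn C o) (hC' : ClubIn C' o) : ClubIn (C ∩ C') o := by
  constructor
  · intro a ha ha0 hacc
    constructor
    · refine hC.1 a ha ha0 (fun b hb => ?_)
      obtain ⟨c, hc, h1, h2⟩ := hacc b hb
      exact ⟨c, hc.1, h1, h2⟩
    · refine hC'.1 a ha ha0 (fun b hb => ?_)
      obtain ⟨c, hc, h1, h2⟩ := hacc b hb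
      exact ⟨c, hc.2, h1, h2⟩
  · intro a ha
    have hstep : ∀ x < o, ∃ y < o, x < y ∧ ((∃ c ∈ C, x < c ∧ c < y) ∧ y ∈ C') := by
      intro x hx
      obtain ⟨c, hcC, hxc, hco⟩ := hC.2 x hx
      obtain ⟨c', hc'C', hcc', hc'o⟩ := hC'.2 c hco
      exact ⟨c', hc'o, hxc.trans hcc', ⟨c, hcC, hxc, hcc'⟩, hc'C'⟩
    obtain ⟨g, hg0, hgo, hglt, hgP⟩ := seq_exists _ hstep ha
    obtain ⟨hαo, hgα⟩ := sup_club hcof hgo hglt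
    have haα : a < ⨆ n, g n := hg0 ▸ hgα 0
    have hα0 : (⨆ n, g n) ≠ 0 := (lt_of_le_of_lt (show (0:Ordinal) ≤ a by simp) haα).ne'
    have hαC : (⨆ n, g n) ∈ C := by
      refine hC.1 _ hαo hα0 (fun b hb => ?_)
      obtain ⟨n, hn⟩ := (Ordinal.lt_iSup_iff).mp hb
      obtain ⟨c, hcC, h1, h2⟩ := (hgP n).1
      exact ⟨c, hcC, lt_trans hn h1, lt_trans h2 (hgα (n + 1))⟩
    have hαC' : (⨆ n, g n) ∈ C' := by
      refine hC'.1 _ hαo hα0 (fun b hb => ?_)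
      obtain ⟨n, hn⟩ := (Ordinal.lt_iSup_iff).mp hb
      exact ⟨g (n + 1), (hgP n).2, lt_trans hn (hglt n), hgα (n + 1)⟩
    exact ⟨⨆ n, g n, ⟨hαC, hαC'⟩, haα, hαo⟩

lemma clubIn_acc {o : Ordinal} (hcof : Cardinal.aleph0 < o.cof) {E : Set Ordinal}
    (hE : ∀ b < o, ∃ c ∈ E, b < c ∧ c < o) :
    ClubIn {a | 0 < a ∧ ∀ b < a, ∃ c ∈ E, b < c ∧ c < a} o := by
  constructor
  · intro a ha ha0 hacc
    refine ⟨pos_iff_ne_zero.mpr ha0, fun b hb => ?_⟩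
    obtain ⟨c', hc', hbc', hc'a⟩ := hacc b hb
    obtain ⟨c, hcE, h1, h2⟩ := hc'.2 b hbc'
    exact ⟨c, hcE, h1, h2.trans hc'a⟩
  · intro a ha
    have hstep : ∀ x < o, ∃ y < o, x < y ∧ y ∈ E := by
      intro x hx
      obtain ⟨c, hcE, h1, h2⟩ := hE x hx
      exact ⟨c, h2, h1, hcE⟩
    obtain ⟨g, hg0, hgo, hglt, hgP⟩ := seq_exists _ hstep ha
    obtain ⟨hαo, hgα⟩ := sup_club hcof hgo hglt
    have haα : a < ⨆ n, g n := hg0 ▸ hgα 0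
    refine ⟨⨆ n, g n, ⟨lt_of_le_of_lt (show (0:Ordinal) ≤ a by simp) haα, fun b hb => ?_⟩, haα, hαo⟩
    obtain ⟨n, hn⟩ := (Ordinal.lt_iSup_iff).mp hb
    exact ⟨g (n + 1), hgP n, lt_trans hn (hglt n), hgα (n + 1)⟩

lemma isCBorel_of_isOpen (κ : Cardinal) (hunc : Cardinal.aleph0 < κ)
    (gsur : ∀ β : Sub κ, ∃ g : Sub κ → Set Ordinal, ∀ X, X ⊆ Set.Iio β.1 → ∃ i, g i = X)
    {U : Set (CS (Sub κ))} (hU : IsOpen U) : IsCBorel U := by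
  classical
  have hnat : ∀ n : ℕ, ((n : Ordinal)) < κ.ord := fun n =>
    lt_of_lt_of_le (Ordinal.nat_lt_omega0 n)
      (by rw [← Cardinal.ord_aleph0]; exact Cardinal.ord_le_ord.mpr hunc.le)
  have h0 : (0 : Ordinal) < κ.ord := by simpa using hnat 0
  haveI hne : Nonempty (Sub κ) := ⟨⟨0, h0⟩⟩
  haveI : Infinite (Sub κ) :=
    Infinite.of_injective (fun n : ℕ => (⟨n, hnat n⟩ : Sub κ))
      (fun a b h => by
        have h2 : ((a : ℕ) : Ordinal) = ((b : ℕ) : Ordinal) := congrArg Subtype.val h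
        exact_mod_cast h2)
  have huniv : cBasic (fun _ => true) (⟨0, h0⟩ : Sub κ) = Set.univ := by
    ext η
    simp only [cBasic, Set.mem_setOf_eq, Set.mem_univ, iff_true]
    intro α hα
    exact absurd (Subtype.coe_lt_coe.mpr hα) (by simp)
  have hempty : IsCBorel (∅ : Set (CS (Sub κ))) := by
    have hcompl := IsCBorel.compl (IsCBorel.basic (I := Sub κ) (fun _ => true) ⟨0, h0⟩)
    rwa [huniv, Set.compl_univ] at hcompl
  have hle : Cardinal.mk (Sub κ × Sub κ) ≤ Cardinal.mk (Sub κ) := by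
    rw [Cardinal.mk_prod, Cardinal.lift_id,
      Cardinal.mul_eq_self (Cardinal.aleph0_le_mk _)]
  obtain ⟨emb⟩ := (Cardinal.le_def _ _).mp hle
  have hpsur : Function.Surjective (Function.invFun emb) :=
    Function.invFun_surjective emb.injective
  set p : Sub κ → Sub κ × Sub κ := Function.invFun emb with hp
  choose g hg using gsur
  set s : Sub κ → Set (CS (Sub κ)) := fun i =>
    if cBasic (fun α => decide (α.1 ∈ g (p i).2 (p i).1)) (p i).2 ⊆ U
    then cBasic (fun α => decide (α.1 ∈ g (p i).2 (p i).1)) (p i).2 else ∅ with hs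
  have hsB : ∀ i, IsCBorel (s i) := by
    intro i
    rw [hs]
    dsimp only
    split
    · exact IsCBorel.basic _ _
    · exact hempty
  have hsU : ∀ i, s i ⊆ U := by
    intro i
    rw [hs]
    dsimp only
    split
    · assumption
    · exact Set.empty_subset U
  have hUeq : U = ⋃ i, s i := by
    apply Set.Subset.antisymm
    · intro η hη
      obtain ⟨β, hβ⟩ :=
        open_basis (show TopologicalSpace.GenerateOpen {V | ∃ ζ β, V = cBasic ζ β} U from hU) η hη
      obtain ⟨j, hj⟩ := hg β {o : Ordinal | ∃ h : o < β.1, η ⟨o, h.trans β.2⟩ = true}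
        (fun o ho => by obtain ⟨h, -⟩ := ho; exact h)
      obtain ⟨i, hi⟩ := hpsur (j, β)
      have hζ : cBasic (fun α => decide (α.1 ∈ g (p i).2 (p i).1)) (p i).2 = cBasic η β := by
        rw [hi]
        apply cBasic_congr
        intro α hα
        have hαβ : α.1 < β.1 := Subtype.coe_lt_coe.mpr hα
        have hmem : α.1 ∈ g β j ↔ η α = true := by
          rw [hj]
          constructor
          · rintro ⟨h, hv⟩
            exact hv
          · intro hv
            exact ⟨hαβ, hv⟩
        cases hv : η α
        · simp only [hv, Bool.false_eq_true, iff_false] at hmem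
          simp [hmem]
        · simp only [hv, iff_true] at hmem
          simp [hmem]
      refine Set.mem_iUnion.mpr ⟨i, ?_⟩
      rw [hs]
      dsimp only
      rw [hζ, if_pos hβ]
      exact mem_cBasic_self η β
    · intro η hη
      obtain ⟨i, hi⟩ := Set.mem_iUnion.mp hη
      exact hsU i hi
  rw [hUeq]
  have hcc : (⋃ i, s i) = (⋂ i, (s i)ᶜ)ᶜ := by
    rw [Set.compl_iInter]
    simp [compl_compl]
  rw [hcc]
  exact IsCBorel.compl (IsCBorel.iInter fun i => IsCBorel.compl (hsB i))

end Aux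

/-- assume `◊_κ(S)` on the stationary set `S ⊆ κ`, witnessed by
`⟨D α : α ∈ S⟩`.  Then `E₀` (equivalence modulo bounded sets) is Borel reducible to `E_S`
(equivalence modulo non-stationarity on `S`), and the map
`f(X) = {α ∈ S : D α and X ∩ α agree on a final segment of α}` is such a reduction. -/
theorem stmt16 (κ : Cardinal) (hreg : κ.IsRegular) (hunc : Cardinal.aleph0 < κ)
    (S : Set Ordinal) (hSsub : S ⊆ Set.Iio κ.ord) (hS : StatIn S κ.ord)
    (D : Ordinal → Set Ordinal) (hD1 : ∀ α ∈ S, D α ⊆ Set.Iio α)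
    (hD2 : ∀ X : Set Ordinal, X ⊆ Set.Iio κ.ord →
      StatIn {α | α ∈ S ∧ D α = X ∩ Set.Iio α} κ.ord) :
    ∃ f : CS (Sub κ) → CS (Sub κ),
      (∀ U : Set (CS (Sub κ)), IsOpen U → IsCBorel (f ⁻¹' U)) ∧
      (∀ (η : CS (Sub κ)) (α : Sub κ),
        f η α = true ↔ (α.1 ∈ S ∧ ∃ β < α.1, ∀ γ : Ordinal, β ≤ γ → γ < α.1 →
          (γ ∈ D α.1 ↔ γ ∈ toSet κ η))) ∧
      (∀ A B : CS (Sub κ),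
        (∃ β < κ.ord, ∀ o ∈ symmDiff (toSet κ A) (toSet κ B), o < β) ↔
        (¬ StatIn (symmDiff (toSet κ (f A)) (toSet κ (f B)) ∩ S) κ.ord)) := by
  classical
  have hlim : Order.IsSuccLimit κ.ord := Cardinal.isSuccLimit_ord hunc.le
  have hcof : Cardinal.aleph0 < (κ.ord).cof := by
    rw [hreg.cof_eq]; exact hunc
  have gsur : ∀ β : Sub κ, ∃ g : Sub κ → Set Ordinal, ∀ X, X ⊆ Set.Iio β.1 → ∃ i, g i = X := by
    intro β
    have hstat : ∀ X : {X : Set Ordinal // X ⊆ Set.Iio β.1},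
        ∃ x, x ∈ {α | α ∈ S ∧ D α = X.1 ∩ Set.Iio α} ∩ Set.Ioo β.1 κ.ord :=
      fun X => hD2 X.1 (fun o ho => lt_trans (X.2 ho) β.2) _ (club_Ioo hlim β.2)
    choose αf hαf using hstat
    have hβα : ∀ X, β.1 < αf X := fun X => (hαf X).2.1
    have hXeq : ∀ X, X.1 = D (αf X) := by
      intro X
      rw [(hαf X).1.2]
      exact (Set.inter_eq_self_of_subset_left
        (fun o ho => lt_trans (X.2 ho) (hβα X))).symm
    set j : {X : Set Ordinal // X ⊆ Set.Iio β.1} → Sub κ :=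
      fun X => ⟨αf X, (hαf X).2.2⟩ with hj
    have hjinj : Function.Injective j := by
      intro X X' h
      have hval : αf X = αf X' := congrArg Subtype.val h
      exact Subtype.ext (by rw [hXeq X, hXeq X', hval])
    haveI : Nonempty {X : Set Ordinal // X ⊆ Set.Iio β.1} := ⟨⟨∅, Set.empty_subset _⟩⟩
    refine ⟨fun i => (Function.invFun j i).1, fun X hX => ⟨j ⟨X, hX⟩, ?_⟩⟩
    exact congrArg Subtype.val (Function.leftInverse_invFun hjinj ⟨X, hX⟩)
  refine ⟨fun η α =>
    decide (α.1 ∈ S ∧ ∃ β < α.1, ∀ γ : Ordinal, β ≤ γ → γ < α.1 →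
      (γ ∈ D α.1 ↔ γ ∈ toSet κ η)), ?_, ?_, ?_⟩
  · intro U hU
    have hloc : ∀ (η η' : CS (Sub κ)) (β : Sub κ),
        (∀ α, α < β → η' α = η α) → ∀ α, α < β →
          (decide (α.1 ∈ S ∧ ∃ b < α.1, ∀ γ : Ordinal, b ≤ γ → γ < α.1 →
            (γ ∈ D α.1 ↔ γ ∈ toSet κ η')) : Bool) =
          decide (α.1 ∈ S ∧ ∃ b < α.1, ∀ γ : Ordinal, b ≤ γ → γ < α.1 →
            (γ ∈ D α.1 ↔ γ ∈ toSet κ η)) := by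
      intro η η' β hagree α hαβ
      apply decide_eq_decide.mpr
      have htoSet : ∀ γ : Ordinal, γ < α.1 → (γ ∈ toSet κ η' ↔ γ ∈ toSet κ η) := by
        intro γ hγ
        have hγκ : γ < κ.ord := hγ.trans α.2
        have hlt : (⟨γ, hγκ⟩ : Sub κ) < β :=
          Subtype.coe_lt_coe.mp (hγ.trans (Subtype.coe_lt_coe.mpr hαβ))
        have hcoord : η' ⟨γ, hγκ⟩ = η ⟨γ, hγκ⟩ := hagree ⟨γ, hγκ⟩ hlt
        constructor
        · rintro ⟨h, hv⟩
          exact ⟨hγκ, by rw [← hcoord]; exact hv⟩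
        · rintro ⟨h, hv⟩
          exact ⟨hγκ, by rw [hcoord]; exact hv⟩
      constructor
      · rintro ⟨h1, b, hb, hag⟩
        exact ⟨h1, b, hb, fun γ h2 h3 => (hag γ h2 h3).trans (htoSet γ h3)⟩
      · rintro ⟨h1, b, hb, hag⟩
        exact ⟨h1, b, hb, fun γ h2 h3 => (hag γ h2 h3).trans (htoSet γ h3).symm⟩
    exact isCBorel_of_isOpen κ hunc gsur (preimage_open hloc hU)
  · intro η α
    exact ⟨of_decide_eq_true, decide_eq_true⟩
  · intro A B
    constructor
    · rintro ⟨β, hβκ, hbd⟩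
      intro hstat
      obtain ⟨x, hx⟩ := hstat (Set.Ioo β κ.ord) (club_Ioo hlim hβκ)
      obtain ⟨⟨hxsym, hxS⟩, hβx, hxκ⟩ := hx
      have hagree : ∀ γ, β ≤ γ → (γ ∈ toSet κ A ↔ γ ∈ toSet κ B) := by
        intro γ hγ
        have hγn : γ ∉ symmDiff (toSet κ A) (toSet κ B) :=
          fun h => absurd (hbd γ h) (not_lt.mpr hγ)
        rw [Set.mem_symmDiff] at hγn
        tauto
      have hfeq :
          (decide (x ∈ S ∧ ∃ b < x, ∀ γ : Ordinal, b ≤ γ → γ < x →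
            (γ ∈ D x ↔ γ ∈ toSet κ A)) : Bool) =
          decide (x ∈ S ∧ ∃ b < x, ∀ γ : Ordinal, b ≤ γ → γ < x →
            (γ ∈ D x ↔ γ ∈ toSet κ B)) := by
        apply decide_eq_decide.mpr
        constructor
        · rintro ⟨h1, b, hb, hag⟩
          exact ⟨h1, max b β, max_lt hb hβx, fun γ hge hlt =>
            (hag γ (le_trans (le_max_left _ _) hge) hlt).trans
              (hagree γ (le_trans (le_max_right _ _) hge))⟩
        · rintro ⟨h1, b, hb, hag⟩
          exact ⟨h1, max b β, max_lt hb hβx, fun γ hge hlt =>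
            (hag γ (le_trans (le_max_left _ _) hge) hlt).trans
              (hagree γ (le_trans (le_max_right _ _) hge)).symm⟩
      rw [Set.mem_symmDiff] at hxsym
      rcases hxsym with ⟨⟨h1, hv⟩, hn⟩ | ⟨⟨h1, hv⟩, hn⟩
      · exact hn ⟨hxκ, hfeq.symm.trans hv⟩
      · exact hn ⟨hxκ, hfeq.trans hv⟩
    · intro hnostat
      by_contra hbd
      apply hnostat
      push_neg at hbd
      have hEsub : symmDiff (toSet κ A) (toSet κ B) ⊆ Set.Iio κ.ord := by
        intro o ho
        rw [Set.mem_symmDiff] at ho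
        rcases ho with ⟨⟨h, -⟩, -⟩ | ⟨⟨h, -⟩, -⟩ <;> exact h
      have hEunb : ∀ b < κ.ord, ∃ c ∈ symmDiff (toSet κ A) (toSet κ B), b < c ∧ c < κ.ord := by
        intro b hb
        obtain ⟨c, hcE, hbc⟩ := hbd (Order.succ b) (hlim.succ_lt hb)
        exact ⟨c, hcE, lt_of_lt_of_le (Order.lt_succ b) hbc, hEsub hcE⟩
      intro C hC
      have hCC' := clubIn_inter hcof hC (clubIn_acc hcof hEunb)
      have hXsub : toSet κ A ⊆ Set.Iio κ.ord := by
        intro o ho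
        obtain ⟨h, -⟩ := ho
        exact h
      obtain ⟨x, hxT, hxC, hxC'⟩ := hD2 (toSet κ A) hXsub _ hCC'
      have hxS : x ∈ S := hxT.1
      have hxD : D x = toSet κ A ∩ Set.Iio x := hxT.2
      have hx0 : (0 : Ordinal) < x := hxC'.1
      have hxκ : x < κ.ord := hSsub hxS
      have hA : (decide (x ∈ S ∧ ∃ b < x, ∀ γ : Ordinal, b ≤ γ → γ < x →
          (γ ∈ D x ↔ γ ∈ toSet κ A)) : Bool) = true := by
        apply decide_eq_true
        refine ⟨hxS, 0, hx0, fun γ _ hγ => ?_⟩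
        rw [hxD]
        exact ⟨fun h => h.1, fun h => ⟨h, hγ⟩⟩
      have hB : (decide (x ∈ S ∧ ∃ b < x, ∀ γ : Ordinal, b ≤ γ → γ < x →
          (γ ∈ D x ↔ γ ∈ toSet κ B)) : Bool) = false := by
        apply decide_eq_false
        rintro ⟨-, b, hb, hag⟩
        obtain ⟨c, hcE, hbc, hcx⟩ := hxC'.2 b hb
        have h1 : c ∈ D x ↔ c ∈ toSet κ B := hag c hbc.le hcx
        have h2 : c ∈ D x ↔ c ∈ toSet κ A := by
          rw [hxD]
          exact ⟨fun h => h.1, fun h => ⟨h, hcx⟩⟩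
        rw [Set.mem_symmDiff] at hcE
        tauto
      refine ⟨x, ⟨?_, hxS⟩, hxC⟩
      rw [Set.mem_symmDiff]
      left
      refine ⟨⟨hxκ, hA⟩, ?_⟩
      rintro ⟨h, hv⟩
      exact Bool.false_ne_true (hB.symm.trans hv)

end GDST
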